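/- If c ≤ γ, the optimal number of dinners for the Business Dinner Problem equals ⌈s/σ⌉. -/

import Mathlib

/-- A schedule of `d` dinners for the Business Dinner Problem with `t` tables,
`s` suppliers, `c` customers, at most `σ` suppliers and at most `γ` customers
per table. `supSeat e i = some tb` means supplier `i` sits at table `tb` at
dinner `e` (and `none` means the supplier skips the dinner); similarly for
customers. -/
structure BDSchedule (t s c σ γ d : ℕ) where
  supSeat : Fin d → Fin s → Option (Fin t)
  cusSeat : Fin d → Fin c → Option (Fin t)
  /-- at most `σ` suppliers at each table at each dinner -/
  supCap : ∀ (e : Fin d) (tb : Fin t),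
    (Finset.univ.filter fun i : Fin s => supSeat e i = some tb).card ≤ σ
  /-- at most `γ` customers at each table at each dinner -/
  cusCap : ∀ (e : Fin d) (tb : Fin t),
    (Finset.univ.filter fun k : Fin c => cusSeat e k = some tb).card ≤ γ
  /-- every supplier and customer share a table at exactly one dinner -/
  meetOnce : ∀ (i : Fin s) (k : Fin c), ∃! e : Fin d,
    ∃ tb : Fin t, supSeat e i = some tb ∧ cusSeat e k = some tb
  /-- two distinct suppliers share a table at no more than one dinner -/
  supPairOnce : ∀ i j : Fin s, i ≠ j →
    (Finset.univ.filter fun e : Fin d =>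
      ∃ tb : Fin t, supSeat e i = some tb ∧ supSeat e j = some tb).card ≤ 1

/-- If `c ≤ γ`, the optimal number of dinners is `⌈s/σ⌉`. -/
theorem business_dinner_c_le_gamma (t s c σ γ : ℕ)
    (ht : 1 ≤ t) (hσ : 1 ≤ σ) (hγ : 1 ≤ γ) (hc : 1 ≤ c) (hcγ : c ≤ γ) :
    IsLeast {d : ℕ | Nonempty (BDSchedule t s c σ γ d)} (⌈(s : ℚ) / σ⌉.toNat) := by
  classical
  set d0 := (⌈(s : ℚ) / σ⌉).toNat with hd0
  have hσQ : (0:ℚ) < σ := by exact_mod_cast hσ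
  have hsd0 : s ≤ σ * d0 := by
    have h1 : (s:ℚ)/σ ≤ ((⌈(s:ℚ)/σ⌉ : ℤ) : ℚ) := Int.le_ceil _
    have h2 : ((⌈(s:ℚ)/σ⌉ : ℤ) : ℚ) ≤ (d0 : ℚ) := by
      rw [hd0]; exact_mod_cast Int.self_le_toNat _
    have h3 : (s:ℚ) ≤ (d0 : ℚ) * σ := (div_le_iff₀ hσQ).mp (h1.trans h2)
    have h4 : s ≤ d0 * σ := by exact_mod_cast h3
    exact le_of_le_of_eq h4 (mul_comm d0 σ)
  constructor
  · refine ⟨⟨fun e i => if (i:ℕ) / σ = (e:ℕ) then some ⟨0, ht⟩ else none,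
      fun _ _ => some ⟨0, ht⟩, ?_, ?_, ?_, ?_⟩⟩
    · intro e tb
      calc (Finset.univ.filter fun i : Fin s =>
            (if (i:ℕ) / σ = (e:ℕ) then some (⟨0, ht⟩ : Fin t) else none) = some tb).card
          ≤ (Finset.univ : Finset (Fin σ)).card := by
            refine Finset.card_le_card_of_injOn
              (fun i => (⟨(i:ℕ) % σ, Nat.mod_lt _ hσ⟩ : Fin σ))
              (fun _ _ => Finset.mem_univ _) ?_
            intro i hi j hj hij
            simp only [Finset.coe_filter, Set.mem_setOf_eq, Finset.mem_univ, true_and] at hi hj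
            have hi2 : (i:ℕ)/σ = (e:ℕ) := by by_contra h; simp [h] at hi
            have hj2 : (j:ℕ)/σ = (e:ℕ) := by by_contra h; simp [h] at hj
            have hm : (i:ℕ) % σ = (j:ℕ) % σ := by simpa using congrArg Fin.val hij
            apply Fin.ext
            calc (i:ℕ) = σ * ((i:ℕ)/σ) + (i:ℕ)%σ := (Nat.div_add_mod _ _).symm
              _ = σ * ((j:ℕ)/σ) + (j:ℕ)%σ := by rw [hi2, hj2, hm]
              _ = (j:ℕ) := Nat.div_add_mod _ _
        _ = σ := by simp
    · intro e tb
      calc (Finset.univ.filter fun k : Fin c => some (⟨0, ht⟩ : Fin t) = some tb).card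
          ≤ (Finset.univ : Finset (Fin c)).card := Finset.card_filter_le _ _
        _ = c := by simp
        _ ≤ γ := hcγ
    · intro i k
      have hlt : (i:ℕ)/σ < d0 := by
        have : (i:ℕ) < s := i.isLt
        exact (Nat.div_lt_iff_lt_mul hσ).mpr
          (lt_of_lt_of_le this (by rw [mul_comm]; exact hsd0))
      refine ⟨⟨(i:ℕ)/σ, hlt⟩, ⟨⟨0, ht⟩, by simp, rfl⟩, ?_⟩
      rintro e' ⟨tb, hsup, _⟩
      have : (i:ℕ)/σ = (e':ℕ) := by by_contra h; simp [h] at hsup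
      exact Fin.ext this.symm
    · intro i j hij
      apply Finset.card_le_one.mpr
      intro e he e' he'
      simp only [Finset.mem_filter, Finset.mem_univ, true_and] at he he'
      obtain ⟨tb, hs1, _⟩ := he
      obtain ⟨tb', hs1', _⟩ := he'
      have h1 : (i:ℕ)/σ = (e:ℕ) := by by_contra h; simp [h] at hs1
      have h1' : (i:ℕ)/σ = (e':ℕ) := by by_contra h; simp [h] at hs1'
      exact Fin.ext (h1 ▸ h1')
  · rintro d ⟨sched⟩
    set k0 : Fin c := ⟨0, hc⟩
    have key : s ≤ d * σ := by
      let f : Fin s → Fin d := fun i => (sched.meetOnce i k0).choose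
      have hf : ∀ i, ∃ tb, sched.supSeat (f i) i = some tb ∧
          sched.cusSeat (f i) k0 = some tb :=
        fun i => (sched.meetOnce i k0).choose_spec.1
      have hcard : (Finset.univ : Finset (Fin s)).card =
          ∑ e : Fin d, (Finset.univ.filter fun i => f i = e).card :=
        Finset.card_eq_sum_card_fiberwise (fun i _ => Finset.mem_univ (f i))
      have hbound : ∀ e : Fin d, (Finset.univ.filter fun i => f i = e).card ≤ σ := by
        intro e
        cases h : sched.cusSeat e k0 with
        | none =>
          have hemp : (Finset.univ.filter fun i => f i = e) = ∅ := by
            ext i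
            simp only [Finset.mem_filter, Finset.mem_univ, true_and,
              Finset.notMem_empty, iff_false]
            intro hfe
            obtain ⟨tb, _, hcus⟩ := hf i
            rw [hfe, h] at hcus
            exact Option.noConfusion rfl (heq_of_eq hcus)
          simp [hemp]
        | some tb =>
          refine le_trans (Finset.card_le_card ?_) (sched.supCap e tb)
          intro i hi
          simp only [Finset.mem_filter, Finset.mem_univ, true_and] at hi ⊢
          obtain ⟨tb', hs, hcus⟩ := hf i
          rw [hi, h] at hcus
          have : tb = tb' := Option.some_injective _ hcus
          rw [hi] at hs
          rw [hs, this]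
      calc s = (Finset.univ : Finset (Fin s)).card := by simp
        _ = ∑ e : Fin d, (Finset.univ.filter fun i => f i = e).card := hcard
        _ ≤ ∑ _e : Fin d, σ := Finset.sum_le_sum (fun e _ => hbound e)
        _ = d * σ := by simp [Finset.sum_const, mul_comm]
    rw [hd0]
    apply Int.toNat_le.mpr
    apply Int.ceil_le.mpr
    rw [div_le_iff₀ hσQ]
    exact_mod_cast key
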